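/- Let A be a T-brace. If the additive group of the ⋆-center ζ(⋆,A) is torsion-free, then the upper ⋆-hypercenter of A coincides with the ⋆-center: ζ_∞(⋆,A) = ζ(⋆,A). -/

import Mathlib

/-!
Basic theory of left braces (skew left braces of abelian type), following
Dixon–Kurdachenko–Subbotin, "On the structure of braces whose subideals are ideals".
-/

universe u v

/-- A left brace: an abelian group `(A,+)`, a group `(A,·)`, satisfying
`a(b+c) = ab + ac - a`.  (The additive and multiplicative identities then coincide.) -/
class LeftBrace (A : Type u) extends AddCommGroup A, Group A where
  mul_add_eq : ∀ a b c : A, a * (b + c) = a * b + a * c - a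

namespace LeftBrace

variable {A : Type u} [LeftBrace A]

/-- The star operation `a ⋆ b = ab - a - b`. -/
def bstar (a b : A) : A := a * b - a - b

/-- A subset of a left brace is a subbrace if it is closed under the additive-group
and multiplicative-group operations (equivalently, it is a left brace under the
restricted operations). -/
structure IsSubbrace (S : Set A) : Prop where
  zero_mem : (0 : A) ∈ S
  add_mem : ∀ {a b : A}, a ∈ S → b ∈ S → a + b ∈ S
  neg_mem : ∀ {a : A}, a ∈ S → -a ∈ S
  mul_mem : ∀ {a b : A}, a ∈ S → b ∈ S → a * b ∈ S
  inv_mem : ∀ {a : A}, a ∈ S → a⁻¹ ∈ S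

/-- `I` is an ideal of the subbrace `J`: `I ⊆ J`, both are subbraces, and
`a ⋆ z, z ⋆ a ∈ I` for all `a ∈ J`, `z ∈ I`. -/
structure IsIdealIn (I J : Set A) : Prop where
  subset : I ⊆ J
  subbrace : IsSubbrace I
  ambient_subbrace : IsSubbrace J
  star_mem_left : ∀ a ∈ J, ∀ z ∈ I, bstar a z ∈ I
  star_mem_right : ∀ a ∈ J, ∀ z ∈ I, bstar z a ∈ I

/-- `I` is an ideal of the brace `A`. -/
def IsIdeal (I : Set A) : Prop := IsIdealIn I (Set.univ : Set A)

/-- `A` is a T-brace if being an ideal is a transitive relation: an ideal of an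
ideal of `A` is an ideal of `A`. -/
def IsTBrace (A : Type u) [LeftBrace A] : Prop :=
  ∀ I J : Set A, IsIdealIn I J → IsIdeal J → IsIdeal I

/-- The `⋆`-center `ζ(⋆,A) = {a | a ⋆ x = x ⋆ a = 0 for all x}`. -/
def starCenter (A : Type u) [LeftBrace A] : Set A :=
  {a : A | ∀ x : A, bstar a x = 0 ∧ bstar x a = 0}

/-- The preimage in `A` of the `⋆`-center of the quotient of `A` by (the ideal) `S`:
`a` belongs to it iff `a ⋆ x ∈ S` and `x ⋆ a ∈ S` for every `x ∈ A`. -/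
def nextCenter (A : Type u) [LeftBrace A] (S : Set A) : Set A :=
  {a : A | ∀ x : A, bstar a x ∈ S ∧ bstar x a ∈ S}

/-- The upper `⋆`-central series, indexed by naturals:
`ζ₀(⋆,A) = 0` and `ζ_{n+1}(⋆,A)/ζ_n(⋆,A) = ζ(⋆, A/ζ_n(⋆,A))`. -/
def zetaNat (A : Type u) [LeftBrace A] : ℕ → Set A
  | 0 => ({0} : Set A)
  | n + 1 => nextCenter A (zetaNat A n)

/-- The upper `⋆`-central series, indexed by ordinals (unions at limit ordinals). -/
noncomputable def zetaOrd (A : Type u) [LeftBrace A] (o : Ordinal.{v}) : Set A :=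
  Ordinal.limitRecOn o (({0} : Set A))
    (fun _ ih => nextCenter A ih)
    (fun o _ ih => ⋃ (o' : Ordinal) (h : o' < o), ih o' h)

/-- The upper `⋆`-hypercenter `ζ_∞(⋆,A)`: the final (stable) term of the upper
`⋆`-central series, i.e. the union of all its terms. -/
noncomputable def starHypercenter (A : Type u) [LeftBrace A] : Set A :=
  ⋃ o : Ordinal.{u}, zetaOrd A o

/-- `A` is `⋆`-hypercentral if `A = ζ_γ(⋆,A)` for some ordinal `γ`. -/
def IsStarHypercentral (A : Type u) [LeftBrace A] : Prop :=
  ∃ γ : Ordinal.{u}, zetaOrd A γ = (Set.univ : Set A)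

/-- `K ⋆ L`: the additive subgroup of `(A,+)` generated by all `x ⋆ y`, `x ∈ K`, `y ∈ L`. -/
def setStar (K L : Set A) : AddSubgroup A :=
  AddSubgroup.closure {z : A | ∃ x ∈ K, ∃ y ∈ L, z = bstar x y}

/-- `rightStarSeries A n = A^{(n+1)}`, where `A^{(1)} = A` and `A^{(n+1)} = A^{(n)} ⋆ A`. -/
def rightStarSeries (A : Type u) [LeftBrace A] : ℕ → Set A
  | 0 => (Set.univ : Set A)
  | n + 1 => ((setStar (rightStarSeries A n) (Set.univ : Set A) : AddSubgroup A) : Set A)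

/-- `leftStarSeries A n = A^{n+1}`, where `A^1 = A` and `A^{n+1} = A ⋆ A^n`. -/
def leftStarSeries (A : Type u) [LeftBrace A] : ℕ → Set A
  | 0 => (Set.univ : Set A)
  | n + 1 => ((setStar (Set.univ : Set A) (leftStarSeries A n) : AddSubgroup A) : Set A)

/-- `A` is Smoktunowicz-nilpotent if `A^{(n)} = A^k = 0` for some naturals `n, k`. -/
def IsSmoktunowiczNilpotent (A : Type u) [LeftBrace A] : Prop :=
  ∃ n k : ℕ, rightStarSeries A n = ({0} : Set A) ∧ leftStarSeries A k = ({0} : Set A)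

/-- The subbrace generated by a subset `M`: the intersection of all subbraces containing `M`. -/
def braceClosure (M : Set A) : Set A := ⋂₀ {S : Set A | IsSubbrace S ∧ M ⊆ S}

end LeftBrace

namespace LeftBrace



variable {A : Type u} [LeftBrace A]

lemma mul_zero' (a : A) : a * 0 = a := by
  have h := mul_add_eq a 0 0
  rw [add_zero] at h
  have h2 : a * 0 - (a * 0 + a * 0 - a) = 0 := sub_eq_zero.mpr h
  have h3 : a - a * 0 = a * 0 - (a * 0 + a * 0 - a) := by abel
  rw [h2] at h3
  exact (sub_eq_zero.mp h3).symm

lemma one_eq_zero : (1 : A) = 0 := by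
  have := mul_zero' (1 : A); rw [one_mul] at this; exact this.symm

lemma zero_mul' (a : A) : (0 : A) * a = a := by rw [← one_eq_zero, one_mul]

lemma bstar_zero_right (a : A) : bstar a 0 = 0 := by simp [bstar, mul_zero']

lemma bstar_zero_left (a : A) : bstar 0 a = 0 := by simp [bstar, zero_mul']

lemma bstar_add_right (a b c : A) : bstar a (b + c) = bstar a b + bstar a c := by
  simp only [bstar, mul_add_eq]; abel

/-- `bstar a ·` as an additive homomorphism. -/
def bstarHom (a : A) : A →+ A where
  toFun := bstar a
  map_zero' := bstar_zero_right a
  map_add' := bstar_add_right a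

@[simp] lemma bstarHom_apply (a b : A) : bstarHom a b = bstar a b := rfl

lemma mul_eq_add (a b : A) : a * b = a + b + bstar a b := by simp only [bstar]; abel

lemma bstar_mul_left (a b c : A) :
    bstar (a * b) c = bstar a c + bstar a (bstar b c) + bstar b c := by
  have h1 : b * c = b + (c + bstar b c) := by simp only [bstar]; abel
  have h2 : (a * b) * c = a * b + (a * c + a * bstar b c - a) - a := by
    rw [mul_assoc, h1, mul_add_eq, mul_add_eq]
  simp only [bstar] at *
  rw [h2]; abel




lemma bstar_one_left (x : A) : bstar 1 x = 0 := by
  rw [one_eq_zero]; exact bstar_zero_left x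

-- starCenter membership facts
lemma starCenter_star_left {z : A} (hz : z ∈ starCenter A) (x : A) : bstar z x = 0 := (hz x).1
lemma starCenter_star_right {z : A} (hz : z ∈ starCenter A) (x : A) : bstar x z = 0 := (hz x).2

lemma zero_mem_starCenter : (0 : A) ∈ starCenter A := fun x =>
  ⟨bstar_zero_left x, bstar_zero_right x⟩

lemma add_mem_starCenter {z w : A} (hz : z ∈ starCenter A) (hw : w ∈ starCenter A) :
    z + w ∈ starCenter A := by
  intro x
  constructor
  · have hmul : z * w = z + w := by
      rw [mul_eq_add, starCenter_star_left hz w, add_zero]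
    rw [← hmul, bstar_mul_left, starCenter_star_left hz, starCenter_star_left hz,
      starCenter_star_left hw]
    abel
  · rw [bstar_add_right, starCenter_star_right hz, starCenter_star_right hw, add_zero]

lemma neg_mem_starCenter {z : A} (hz : z ∈ starCenter A) : -z ∈ starCenter A := by
  have hmul : z * (-z) = 1 := by
    rw [mul_eq_add, starCenter_star_left hz, one_eq_zero]; abel
  have hinv : z⁻¹ = -z := inv_eq_of_mul_eq_one_right hmul
  intro x
  constructor
  · have h0 : bstar (z * z⁻¹) x = 0 := by rw [mul_inv_cancel, bstar_one_left]
    rw [bstar_mul_left, starCenter_star_left hz, starCenter_star_left hz, zero_add,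
      zero_add] at h0
    rwa [← hinv]
  · have : bstar x (-z) = -(bstar x z) := by
      have := map_neg (bstarHom x) z; simpa using this
    rw [this, starCenter_star_right hz, neg_zero]

/-- The ⋆-center as an additive subgroup. -/
def starCenterAdd (A : Type u) [LeftBrace A] : AddSubgroup A where
  carrier := starCenter A
  zero_mem' := zero_mem_starCenter
  add_mem' := add_mem_starCenter
  neg_mem' := neg_mem_starCenter

lemma zsmul_mem_starCenter {z : A} (hz : z ∈ starCenter A) (k : ℤ) :
    k • z ∈ starCenter A :=
  AddSubgroup.zsmul_mem (starCenterAdd A) hz k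

lemma bstar_zsmul_right (x : A) (k : ℤ) (b : A) : bstar x (k • b) = k • bstar x b := by
  have := map_zsmul (bstarHom x) k b; simpa using this

-- nextCenter of starCenter facts
lemma nc_star_left {a : A} (ha : a ∈ nextCenter A (starCenter A)) (x : A) :
    bstar a x ∈ starCenter A := (ha x).1
lemma nc_star_right {a : A} (ha : a ∈ nextCenter A (starCenter A)) (x : A) :
    bstar x a ∈ starCenter A := (ha x).2

lemma bstar_inv_left {a : A} (ha : a ∈ nextCenter A (starCenter A)) (x : A) :
    bstar a⁻¹ x = -(bstar a x) := by
  have h0 : bstar (a * a⁻¹) x = 0 := by rw [mul_inv_cancel, bstar_one_left]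
  rw [bstar_mul_left] at h0
  -- h0 : bstar a x + bstar a (bstar a⁻¹ x) + bstar a⁻¹ x = 0
  have ht : bstar a⁻¹ x ∈ starCenter A := by
    have heq : bstar a⁻¹ x = -(bstar a x + bstar a (bstar a⁻¹ x)) :=
      eq_neg_of_add_eq_zero_right h0
    rw [heq, neg_add]
    exact add_mem_starCenter (neg_mem_starCenter (nc_star_left ha x))
      (neg_mem_starCenter (nc_star_left ha _))
  rw [starCenter_star_right ht a, add_zero] at h0
  exact eq_neg_of_add_eq_zero_right h0

lemma bstar_inv_right {a : A} (ha : a ∈ nextCenter A (starCenter A)) (x : A) :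
    bstar x a⁻¹ = -(bstar x a) := by
  have h0 : bstar x (a * a⁻¹) = 0 := by rw [mul_inv_cancel, one_eq_zero, bstar_zero_right]
  rw [mul_eq_add, bstar_add_right, bstar_add_right,
    starCenter_star_right (nc_star_left ha a⁻¹) x, add_zero] at h0
  exact eq_neg_of_add_eq_zero_right h0

lemma inv_mem_nextCenter {a : A} (ha : a ∈ nextCenter A (starCenter A)) :
    a⁻¹ ∈ nextCenter A (starCenter A) := by
  intro x
  constructor
  · rw [bstar_inv_left ha]; exact neg_mem_starCenter (nc_star_left ha x)
  · rw [bstar_inv_right ha]; exact neg_mem_starCenter (nc_star_right ha x)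

lemma add_inv_mem_starCenter {a : A} (ha : a ∈ nextCenter A (starCenter A)) :
    a + a⁻¹ ∈ starCenter A := by
  have h0 : a * a⁻¹ = a + a⁻¹ + bstar a a⁻¹ := mul_eq_add a a⁻¹
  rw [mul_inv_cancel, one_eq_zero] at h0
  have heq : a + a⁻¹ = -(bstar a a⁻¹) := eq_neg_of_add_eq_zero_left h0.symm
  rw [heq]
  exact neg_mem_starCenter (nc_star_left ha a⁻¹)




/-- R3: star on the right with `k•a + z`, `z` central. -/
lemma bstar_right_formula {a z : A} (hz : z ∈ starCenter A) (k : ℤ) (x : A) :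
    bstar x (k • a + z) = k • bstar x a := by
  rw [bstar_add_right, bstar_zsmul_right, starCenter_star_right hz, add_zero]

/-- L3: star on the left with any element congruent to `k•a` mod the ⋆-center,
for `a` in the second ⋆-center. -/
lemma bstar_left_formula {a : A} (ha : a ∈ nextCenter A (starCenter A)) :
    ∀ (k : ℤ) (u : A), u - k • a ∈ starCenter A → ∀ x : A, bstar u x = k • bstar a x := by
  intro k
  induction k using Int.induction_on with
  | zero =>
    intro u hu x
    rw [zero_smul, sub_zero] at hu
    rw [starCenter_star_left hu, zero_smul]
  | succ i ih =>
    intro u hu x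
    set v := a⁻¹ * u with hv
    have huv : u = a * v := by rw [hv, mul_inv_cancel_left]
    have hvz : v - (i : ℤ) • a ∈ starCenter A := by
      have h1 : v - (i : ℤ) • a
          = (a + a⁻¹) + (u - ((i : ℤ) + 1) • a) + bstar a⁻¹ u := by
        rw [hv, mul_eq_add, add_smul, one_smul]; abel
      rw [h1]
      exact add_mem_starCenter
        (add_mem_starCenter (add_inv_mem_starCenter ha) hu)
        (nc_star_left (inv_mem_nextCenter ha) u)
    have hvx : bstar v x = (i : ℤ) • bstar a x := ih v hvz x
    rw [huv, bstar_mul_left, hvx,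
      starCenter_star_right (zsmul_mem_starCenter (nc_star_left ha x) (i : ℤ)) a,
      add_zero, add_smul, one_smul]
    abel
  | pred i ih =>
    intro u hu x
    set v := a * u with hv
    have huv : u = a⁻¹ * v := by rw [hv, inv_mul_cancel_left]
    have hvz : v - (-(i : ℤ)) • a ∈ starCenter A := by
      have h1 : v - (-(i : ℤ)) • a
          = (u - (-(i : ℤ) - 1) • a) + bstar a u := by
        rw [hv, mul_eq_add, sub_smul, one_smul]; abel
      rw [h1]
      exact add_mem_starCenter hu (nc_star_left ha u)
    have hvx : bstar v x = (-(i : ℤ)) • bstar a x := ih v hvz x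
    rw [huv, bstar_mul_left, bstar_inv_left ha, hvx,
      starCenter_star_right (zsmul_mem_starCenter (nc_star_left ha x) (-(i : ℤ))) a⁻¹,
      add_zero, sub_smul, one_smul]
    abel




lemma sub_mem_starCenter {z w : A} (hz : z ∈ starCenter A) (hw : w ∈ starCenter A) :
    z - w ∈ starCenter A := (starCenterAdd A).sub_mem hz hw

lemma eq_zero_of_zsmul_center
    (hfree : ∀ a ∈ starCenter A, a ≠ 0 → ¬ IsOfFinAddOrder a)
    {z : A} (hz : z ∈ starCenter A) {m : ℤ} (hm : m ≠ 0) (h : m • z = 0) : z = 0 := by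
  by_contra hne
  exact hfree z hz hne (isOfFinAddOrder_iff_zsmul_eq_zero.mpr ⟨m, hm, h⟩)

lemma univ_subbrace : IsSubbrace (Set.univ : Set A) :=
  ⟨trivial, fun _ _ => trivial, fun _ => trivial, fun _ _ => trivial, fun _ => trivial⟩

lemma nextCenter_subset_starCenter (hT : IsTBrace A)
    (hfree : ∀ a ∈ starCenter A, a ≠ 0 → ¬ IsOfFinAddOrder a) :
    nextCenter A (starCenter A) ⊆ starCenter A := by
  intro a ha
  have hsC : bstar a a ∈ starCenter A := nc_star_left ha a
  by_cases hcase : ∃ m : ℤ, m ≠ 0 ∧ m • a ∈ starCenter A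
  · obtain ⟨m, hm0, hmz⟩ := hcase
    intro x
    constructor
    · have h1 : bstar (m • a) x = m • bstar a x :=
        bstar_left_formula ha m (m • a)
          (by rw [sub_self]; exact zero_mem_starCenter) x
      have h2 : bstar (m • a) x = 0 := starCenter_star_left hmz x
      exact eq_zero_of_zsmul_center hfree (nc_star_left ha x) hm0 (h1 ▸ h2)
    · have h1 : bstar x (m • a) = m • bstar x a := bstar_zsmul_right x m a
      have h2 : bstar x (m • a) = 0 := starCenter_star_right hmz x
      exact eq_zero_of_zsmul_center hfree (nc_star_right ha x) hm0 (h1 ▸ h2)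
  · have hord : ∀ m : ℤ, m • a ∈ starCenter A → m = 0 := by
      intro m hm
      by_contra h0
      exact hcase ⟨m, h0, hm⟩
    set Z := starCenter A with hZ
    set s : A := bstar a a with hs
    set J : Set A := {u : A | ∃ k : ℤ, ∃ z ∈ Z, u = (2*k) • a + (2:ℤ) • z} with hJdef
    set I : Set A := {u : A | ∃ k q : ℤ, u = (2*k) • a + (4*q) • s} with hIdef
    -- star computation helpers
    have hJL : ∀ (k : ℤ) (z : A), z ∈ Z → ∀ x : A,
        bstar ((2*k) • a + (2:ℤ) • z) x = (2*k) • bstar a x := by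
      intro k z hz x
      refine bstar_left_formula ha (2*k) _ ?_ x
      have : (2*k) • a + (2:ℤ) • z - (2*k) • a = (2:ℤ) • z := by abel
      rw [this]
      exact zsmul_mem_starCenter hz 2
    have hIL : ∀ (k q : ℤ) (x : A),
        bstar ((2*k) • a + (4*q) • s) x = (2*k) • bstar a x := by
      intro k q x
      refine bstar_left_formula ha (2*k) _ ?_ x
      have : (2*k) • a + (4*q) • s - (2*k) • a = (4*q) • s := by abel
      rw [this]
      exact zsmul_mem_starCenter hsC _
    have hJR : ∀ (k : ℤ) (z : A), z ∈ Z → ∀ x : A,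
        bstar x ((2*k) • a + (2:ℤ) • z) = (2*k) • bstar x a := fun k z hz x =>
      bstar_right_formula (zsmul_mem_starCenter hz 2) (2*k) x
    have hIR : ∀ (k q : ℤ) (x : A),
        bstar x ((2*k) • a + (4*q) • s) = (2*k) • bstar x a := fun k q x =>
      bstar_right_formula (zsmul_mem_starCenter hsC (4*q)) (2*k) x
    -- J is a subbrace
    have hJsub : IsSubbrace J := by
      constructor
      · exact ⟨0, 0, zero_mem_starCenter, by module⟩
      · rintro u v ⟨k, z, hz, rfl⟩ ⟨k', z', hz', rfl⟩
        exact ⟨k + k', z + z', add_mem_starCenter hz hz', by module⟩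
      · rintro u ⟨k, z, hz, rfl⟩
        exact ⟨-k, -z, neg_mem_starCenter hz, by module⟩
      · rintro u v ⟨k, z, hz, rfl⟩ ⟨k', z', hz', rfl⟩
        refine ⟨k + k', z + z' + (2*(k*k')) • s,
          add_mem_starCenter (add_mem_starCenter hz hz') (zsmul_mem_starCenter hsC _), ?_⟩
        rw [mul_eq_add, hJL k z hz, hJR k' z' hz' a, ← hs, smul_smul]
        module
      · rintro u ⟨k, z, hz, rfl⟩
        have hz2 : -z + (2*(k*k)) • s ∈ Z :=
          add_mem_starCenter (neg_mem_starCenter hz) (zsmul_mem_starCenter hsC _)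
        have huv : ((2*k) • a + (2:ℤ) • z) * ((2*(-k)) • a + (2:ℤ) • (-z + (2*(k*k)) • s)) = 1 := by
          rw [mul_eq_add, hJL k z hz, hJR (-k) _ hz2 a, ← hs, smul_smul, one_eq_zero]
          module
        rw [inv_eq_of_mul_eq_one_right huv]
        exact ⟨-k, -z + (2*(k*k)) • s, hz2, rfl⟩
    -- J is an ideal of A
    have hJid : IsIdeal J := by
      refine ⟨Set.subset_univ _, hJsub, univ_subbrace, ?_, ?_⟩
      · rintro x - u ⟨k, z, hz, rfl⟩
        refine ⟨0, k • bstar x a, zsmul_mem_starCenter (nc_star_right ha x) k, ?_⟩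
        rw [hJR k z hz x]
        module
      · rintro x - u ⟨k, z, hz, rfl⟩
        refine ⟨0, k • bstar a x, zsmul_mem_starCenter (nc_star_left ha x) k, ?_⟩
        rw [hJL k z hz x]
        module
    -- I is a subbrace
    have hIsub : IsSubbrace I := by
      constructor
      · exact ⟨0, 0, by module⟩
      · rintro u v ⟨k, q, rfl⟩ ⟨k', q', rfl⟩
        exact ⟨k + k', q + q', by module⟩
      · rintro u ⟨k, q, rfl⟩
        exact ⟨-k, -q, by module⟩
      · rintro u v ⟨k, q, rfl⟩ ⟨k', q', rfl⟩
        refine ⟨k + k', q + q' + k*k', ?_⟩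
        rw [mul_eq_add, hIL k q, hIR k' q' a, ← hs, smul_smul]
        module
      · rintro u ⟨k, q, rfl⟩
        have huv : ((2*k) • a + (4*q) • s) * ((2*(-k)) • a + (4*(k*k - q)) • s) = 1 := by
          rw [mul_eq_add, hIL k q, hIR (-k) (k*k - q) a, ← hs, smul_smul, one_eq_zero]
          module
        rw [inv_eq_of_mul_eq_one_right huv]
        exact ⟨-k, k*k - q, rfl⟩
    -- I is an ideal of J
    have hIJ : IsIdealIn I J := by
      refine ⟨?_, hIsub, hJsub, ?_, ?_⟩
      · rintro u ⟨k, q, rfl⟩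
        exact ⟨k, (2*q) • s, zsmul_mem_starCenter hsC _, by module⟩
      · rintro u ⟨k, z, hz, rfl⟩ w ⟨k', q', rfl⟩
        refine ⟨0, k * k', ?_⟩
        rw [hJL k z hz, hIR k' q' a, ← hs, smul_smul]
        module
      · rintro u ⟨k, z, hz, rfl⟩ w ⟨k', q', rfl⟩
        refine ⟨0, k' * k, ?_⟩
        rw [hIL k' q', hJR k z hz a, ← hs, smul_smul]
        module
    have hIid : IsIdeal I := hT I J hIJ hJid
    -- now extract the conclusion
    have h2a : (2:ℤ) • a ∈ I := ⟨1, 0, by module⟩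
    have key1 : ∀ x : A, ∃ q : ℤ, bstar x a = (2*q) • s := by
      intro x
      obtain ⟨k, q, hkq⟩ := hIid.star_mem_left x (Set.mem_univ x) _ h2a
      rw [bstar_zsmul_right] at hkq
      have hmem : (2*k) • a ∈ Z := by
        have heq : (2*k) • a = (2:ℤ) • bstar x a - (4*q) • s := by rw [hkq]; abel
        rw [heq]
        exact sub_mem_starCenter (zsmul_mem_starCenter (nc_star_right ha x) 2)
          (zsmul_mem_starCenter hsC _)
      have hk0 : k = 0 := by have := hord _ hmem; omega
      subst hk0
      refine ⟨q, ?_⟩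
      have h20 : (2:ℤ) • (bstar x a - (2*q) • s) = 0 := by
        rw [smul_sub, hkq]; module
      have := eq_zero_of_zsmul_center hfree
        (sub_mem_starCenter (nc_star_right ha x) (zsmul_mem_starCenter hsC _))
        (by norm_num : (2:ℤ) ≠ 0) h20
      rw [sub_eq_zero] at this
      exact this
    have key2 : ∀ x : A, ∃ q : ℤ, bstar a x = (2*q) • s := by
      intro x
      obtain ⟨k, q, hkq⟩ := hIid.star_mem_right x (Set.mem_univ x) _ h2a
      have hL : bstar ((2:ℤ) • a) x = (2:ℤ) • bstar a x :=
        bstar_left_formula ha 2 _ (by rw [sub_self]; exact zero_mem_starCenter) x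
      rw [hL] at hkq
      have hmem : (2*k) • a ∈ Z := by
        have heq : (2*k) • a = (2:ℤ) • bstar a x - (4*q) • s := by rw [hkq]; abel
        rw [heq]
        exact sub_mem_starCenter (zsmul_mem_starCenter (nc_star_left ha x) 2)
          (zsmul_mem_starCenter hsC _)
      have hk0 : k = 0 := by have := hord _ hmem; omega
      subst hk0
      refine ⟨q, ?_⟩
      have h20 : (2:ℤ) • (bstar a x - (2*q) • s) = 0 := by
        rw [smul_sub, hkq]; module
      have := eq_zero_of_zsmul_center hfree
        (sub_mem_starCenter (nc_star_left ha x) (zsmul_mem_starCenter hsC _))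
        (by norm_num : (2:ℤ) ≠ 0) h20
      rw [sub_eq_zero] at this
      exact this
    -- first: s = 0
    obtain ⟨q0, hq0⟩ := key1 a
    rw [← hs] at hq0
    have hs0 : s = 0 := by
      have h1 : (1 - 2*q0) • s = s - (2*q0) • s := by rw [sub_smul, one_smul]
      have h2 : s - (2*q0) • s = 0 := by nth_rewrite 1 [hq0]; exact sub_self _
      exact eq_zero_of_zsmul_center hfree hsC (by omega : (1:ℤ) - 2*q0 ≠ 0) (h1.trans h2)
    intro x
    constructor
    · obtain ⟨q, hq⟩ := key2 x
      rw [hq, hs0, smul_zero]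
    · obtain ⟨q, hq⟩ := key1 x
      rw [hq, hs0, smul_zero]





lemma zetaOrd_zero : zetaOrd A (0 : Ordinal.{v}) = ({0} : Set A) :=
  Ordinal.limitRecOn_zero _ _ _

lemma zetaOrd_succ (o : Ordinal.{v}) :
    zetaOrd A (Order.succ o) = nextCenter A (zetaOrd A o) :=
  Ordinal.limitRecOn_succ _ _ _ _

lemma zetaOrd_limit {o : Ordinal.{v}} (ho : Order.IsSuccLimit o) :
    zetaOrd A o = ⋃ (o' : Ordinal) (_ : o' < o), zetaOrd A o' :=
  Ordinal.limitRecOn_limit _ _ _ _ ho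

lemma nextCenter_mono {S T : Set A} (h : S ⊆ T) : nextCenter A S ⊆ nextCenter A T :=
  fun a ha x => ⟨h (ha x).1, h (ha x).2⟩

lemma zetaOrd_subset_starCenter (hT : IsTBrace A)
    (hfree : ∀ a ∈ starCenter A, a ≠ 0 → ¬ IsOfFinAddOrder a) :
    ∀ o : Ordinal.{v}, zetaOrd A o ⊆ starCenter A := by
  intro o
  induction o using Ordinal.induction with
  | h o ih =>
    rcases Ordinal.zero_or_succ_or_isSuccLimit o with h0 | ⟨p, hp⟩ | hlim
    · subst h0
      rw [zetaOrd_zero]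
      rintro u rfl
      exact zero_mem_starCenter
    · subst hp
      rw [zetaOrd_succ]
      exact (nextCenter_mono (ih p (Order.lt_succ p))).trans
        (nextCenter_subset_starCenter hT hfree)
    · rw [zetaOrd_limit hlim]
      exact Set.iUnion₂_subset fun o' ho' => ih o' ho'

lemma starCenter_subset_zetaOrd_one :
    starCenter A ⊆ zetaOrd A (1 : Ordinal.{v}) := by
  intro z hz
  have h1 : (1 : Ordinal.{v}) = Order.succ 0 := by
    rw [← Ordinal.add_one_eq_succ, zero_add]
  rw [h1, zetaOrd_succ, zetaOrd_zero]
  intro x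
  exact ⟨starCenter_star_left hz x, starCenter_star_right hz x⟩





end LeftBrace

open LeftBrace in
theorem starHypercenter_eq_starCenter_of_torsionFree_starCenter
    {A : Type u} [LeftBrace A] (hT : IsTBrace A)
    (hfree : ∀ a ∈ starCenter A, a ≠ 0 → ¬ IsOfFinAddOrder a) :
    starHypercenter A = starCenter A := by
  apply Set.Subset.antisymm
  · intro u hu
    obtain ⟨_, ⟨o, rfl⟩, hmem⟩ := hu
    exact zetaOrd_subset_starCenter hT hfree o hmem
  · intro z hz
    exact Set.mem_iUnion.mpr ⟨(1 : Ordinal.{u}), starCenter_subset_zetaOrd_one hz⟩
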